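/- Let α ≥ 1, let the agents have arbitrary nonnegative loss functions, and let τ = ⌈n/k⌉. Suppose C_1, C_2, …, C_m are pairwise disjoint nonempty subsets whose union is N, constructed greedily so that for each j, writing N_j = N \ (C_1 ∪ … ∪ C_{j−1}): if |N_j| ≥ τ then C_j is an α-approximate solution to the Most Cohesive Cluster problem on (N_j, τ), and if |N_j| < τ then C_j = N_j (so j = m). Then m ≤ k and the resulting k-clustering (C_1,…,C_m, with the remaining clusters empty) satisfies α-FJR. -/

import Mathlib

open scoped Classical

/-- The maximum of `f` over the finite set `S` (`0` if `S` is empty). -/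
noncomputable def maxOver {ι : Type*} (S : Finset ι) (f : ι → ℝ) : ℝ :=
  if h : S.Nonempty then S.sup' h f else 0

/-- The minimum of `f` over the finite set `S` (`0` if `S` is empty). -/
noncomputable def minOver {ι : Type*} (S : Finset ι) (f : ι → ℝ) : ℝ :=
  if h : S.Nonempty then S.inf' h f else 0

/-- The cluster containing agent `i` under the clustering (assignment) `C`. -/
def clusterOf {n k : ℕ} (C : Fin n → Fin k) (i : Fin n) : Finset (Fin n) :=
  Finset.univ.filter (fun j => C j = C i)

/-- The average loss of agent `i` in cluster `S`. -/
noncomputable def avgLoss {n : ℕ} (d : Fin n → Fin n → ℝ) (i : Fin n)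
    (S : Finset (Fin n)) : ℝ :=
  (∑ j ∈ S, d i j) / (S.card : ℝ)

/-- The maximum loss of agent `i` in cluster `S`. -/
noncomputable def maxLoss {n : ℕ} (d : Fin n → Fin n → ℝ) (i : Fin n)
    (S : Finset (Fin n)) : ℝ :=
  maxOver S (d i)

/-- `d` is a (pseudo)metric on the agents: zero on the diagonal, symmetric, and
satisfying the triangle inequality. -/
def IsPseudometric {n : ℕ} (d : Fin n → Fin n → ℝ) : Prop :=
  (∀ i, d i i = 0) ∧ (∀ i j, d i j = d j i) ∧ (∀ i j l, d i l ≤ d i j + d j l)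

/-- `C` is in the `α`-core: there is no group `S` of at least `n/k` agents such that
`α · ℓ i S < ℓ i (C(i))` for every `i ∈ S`. -/
def InCore {n k : ℕ} (α : ℝ) (ℓ : Fin n → Finset (Fin n) → ℝ) (C : Fin n → Fin k) : Prop :=
  ¬ ∃ S : Finset (Fin n), (n : ℝ) / k ≤ S.card ∧ ∀ i ∈ S, α * ℓ i S < ℓ i (clusterOf C i)

/-- `C` satisfies `α`-FJR: there is no group `S` of at least `n/k` agents such that
`α · max_{i ∈ S} ℓ i S < min_{j ∈ S} ℓ j (C(j))`. -/
def SatisfiesFJR {n k : ℕ} (α : ℝ) (ℓ : Fin n → Finset (Fin n) → ℝ)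
    (C : Fin n → Fin k) : Prop :=
  ¬ ∃ S : Finset (Fin n), (n : ℝ) / k ≤ S.card ∧
      α * maxOver S (fun i => ℓ i S) < minOver S (fun j => ℓ j (clusterOf C j))

/-- `S` is a `lam`-approximate solution to the Most Cohesive Cluster problem on `(N', τ)`:
`S ⊆ N'`, `|S| ≥ τ`, and `max_{i ∈ S} ℓ i S ≤ lam · max_{i ∈ S'} ℓ i S'` for every
`S' ⊆ N'` with `|S'| ≥ τ`. -/
def ApproxMCC {n : ℕ} (lam : ℝ) (ℓ : Fin n → Finset (Fin n) → ℝ)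
    (N' : Finset (Fin n)) (τ : ℕ) (S : Finset (Fin n)) : Prop :=
  S ⊆ N' ∧ τ ≤ S.card ∧
  ∀ S' ⊆ N', τ ≤ S'.card →
    maxOver S (fun i => ℓ i S) ≤ lam * maxOver S' (fun i => ℓ i S')


lemma le_maxOver {ι : Type*} {S : Finset ι} {i : ι} (hi : i ∈ S) (f : ι → ℝ) :
    f i ≤ maxOver S f := by
  rw [maxOver, dif_pos ⟨i, hi⟩]
  exact Finset.le_sup' f hi

lemma minOver_le {ι : Type*} {S : Finset ι} {i : ι} (hi : i ∈ S) (f : ι → ℝ) :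
    minOver S f ≤ f i := by
  rw [minOver, dif_pos ⟨i, hi⟩]
  exact Finset.inf'_le f hi

/-- Greedy cohesive clustering with an `α`-approximate Most Cohesive Cluster subroutine:
if pairwise disjoint nonempty clusters `C_0, …, C_{m-1}` covering all agents are constructed
greedily — with `N_j` the agents not yet covered before step `j`, cluster `C_j` is an
`α`-approximate most cohesive cluster on `(N_j, ⌈n/k⌉)` whenever `|N_j| ≥ ⌈n/k⌉`, and
otherwise `C_j = N_j` and `j` is the last step — then `m ≤ k` and the resulting
`k`-clustering satisfies `α`-FJR. -/
theorem stmt6 (n k : ℕ) (hk : 1 ≤ k) (hkn : k ≤ n) (α : ℝ) (hα : 1 ≤ α)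
    (ℓ : Fin n → Finset (Fin n) → ℝ) (hℓ : ∀ i S, i ∈ S → 0 ≤ ℓ i S)
    (m : ℕ) (hm : 1 ≤ m) (Cs : Fin m → Finset (Fin n))
    (hne : ∀ j, (Cs j).Nonempty)
    (hdisj : ∀ j j' : Fin m, j ≠ j' → Disjoint (Cs j) (Cs j'))
    (hcover : Finset.univ.biUnion Cs = (Finset.univ : Finset (Fin n)))
    (hgreedy : ∀ j : Fin m,
      (⌈(n : ℝ) / k⌉₊ ≤
          (Finset.univ \ (Finset.univ.filter (fun j' => j' < j)).biUnion Cs).card →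
        ApproxMCC α ℓ (Finset.univ \ (Finset.univ.filter (fun j' => j' < j)).biUnion Cs)
          ⌈(n : ℝ) / k⌉₊ (Cs j)) ∧
      ((Finset.univ \ (Finset.univ.filter (fun j' => j' < j)).biUnion Cs).card <
          ⌈(n : ℝ) / k⌉₊ →
        Cs j = Finset.univ \ (Finset.univ.filter (fun j' => j' < j)).biUnion Cs ∧
        j.val = m - 1)) :
    m ≤ k ∧
    ∀ g : Fin n → Fin m, (∀ i, i ∈ Cs (g i)) →
      ¬ ∃ S : Finset (Fin n), (n : ℝ) / k ≤ S.card ∧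
          α * maxOver S (fun i => ℓ i S) < minOver S (fun i => ℓ i (Cs (g i))) := by

  have hk0 : (0:ℝ) < k := by exact_mod_cast hk
  have hn1 : 1 ≤ n := le_trans hk hkn
  have hτ1 : 1 ≤ ⌈(n : ℝ) / k⌉₊ := by
    have : (0:ℝ) < (n:ℝ)/k := div_pos (by exact_mod_cast hn1) hk0
    exact Nat.ceil_pos.mpr this
  have hnτ : n ≤ k * ⌈(n : ℝ) / k⌉₊ := by
    have h1 : (n:ℝ)/k ≤ (⌈(n : ℝ) / k⌉₊ : ℝ) := Nat.le_ceil _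
    have : (n:ℝ) ≤ (k:ℝ) * ⌈(n : ℝ) / k⌉₊ := by
      have := mul_le_mul_of_nonneg_left h1 (le_of_lt hk0)
      calc (n:ℝ) = k * ((n:ℝ)/k) := by field_simp
        _ ≤ _ := this
    exact_mod_cast this
  have hsum : ∑ j, (Cs j).card = n := by
    rw [← Finset.card_biUnion (fun j _ j' _ h => hdisj j j' h), hcover,
      Finset.card_univ, Fintype.card_fin]
  have hmlt : m - 1 < m := by omega
  have hbig : ∀ j : Fin m, j ≠ ⟨m-1, hmlt⟩ → ⌈(n : ℝ) / k⌉₊ ≤ (Cs j).card := by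
    intro j hj
    rcases lt_or_ge
      ((Finset.univ \ (Finset.univ.filter (fun j' => j' < j)).biUnion Cs).card)
      ⌈(n : ℝ) / k⌉₊ with h | h
    · exact absurd (Fin.ext ((hgreedy j).2 h).2) hj
    · exact ((hgreedy j).1 h).2.1
  have hmk : m ≤ k := by
    by_contra hkm
    push_neg at hkm
    have hc : (Finset.univ.erase (⟨m-1, hmlt⟩ : Fin m)).card = m - 1 := by
      rw [Finset.card_erase_of_mem (Finset.mem_univ _), Finset.card_univ,
        Fintype.card_fin]
    have h1 : (m-1) * ⌈(n : ℝ) / k⌉₊ + 1 ≤ n := by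
      have hsum2 : ∑ j ∈ Finset.univ.erase (⟨m-1, hmlt⟩ : Fin m), (Cs j).card
          + (Cs ⟨m-1, hmlt⟩).card = n := by
        rw [Finset.sum_erase_add _ _ (Finset.mem_univ _)]; exact hsum
      have hA : (m-1) * ⌈(n : ℝ) / k⌉₊ ≤
          ∑ j ∈ Finset.univ.erase (⟨m-1, hmlt⟩ : Fin m), (Cs j).card := by
        have := Finset.card_nsmul_le_sum
          (Finset.univ.erase (⟨m-1, hmlt⟩ : Fin m)) (fun j => (Cs j).card)
          ⌈(n : ℝ) / k⌉₊ (fun j hj => hbig j (Finset.ne_of_mem_erase hj))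
        simpa [hc, smul_eq_mul] using this
      have hB : 1 ≤ (Cs (⟨m-1, hmlt⟩ : Fin m)).card :=
        Finset.card_pos.mpr (hne _)
      omega
    have h2 : k * ⌈(n : ℝ) / k⌉₊ ≤ (m-1) * ⌈(n : ℝ) / k⌉₊ :=
      Nat.mul_le_mul_right _ (by omega)
    omega
  refine ⟨hmk, ?_⟩
  intro g hg
  rintro ⟨S, hScard, hlt⟩
  have hτS : ⌈(n : ℝ) / k⌉₊ ≤ S.card := Nat.ceil_le.mpr hScard
  have hSne : S.Nonempty := Finset.card_pos.mp (lt_of_lt_of_le hτ1 hτS)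
  obtain ⟨i0, hi0⟩ := hSne
  set T : Finset (Fin m) :=
    Finset.univ.filter (fun j : Fin m => (Cs j ∩ S).Nonempty) with hT
  have hTne : T.Nonempty :=
    ⟨g i0, by simp only [hT, Finset.mem_filter, Finset.mem_univ, true_and]
              exact ⟨i0, Finset.mem_inter.mpr ⟨hg i0, hi0⟩⟩⟩
  set j0 : Fin m := T.min' hTne with hj0def
  have hj0 : (Cs j0 ∩ S).Nonempty :=
    (Finset.mem_filter.mp (T.min'_mem hTne)).2
  have hmin : ∀ j : Fin m, j < j0 → ∀ x ∈ Cs j, x ∉ S := by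
    intro j hjlt x hx hxS
    have : j0 ≤ j := T.min'_le j (by
      simp only [hT, Finset.mem_filter, Finset.mem_univ, true_and]
      exact ⟨x, Finset.mem_inter.mpr ⟨hx, hxS⟩⟩)
    exact absurd hjlt (not_lt.mpr this)
  have hSN : S ⊆ Finset.univ \ (Finset.univ.filter (fun j' => j' < j0)).biUnion Cs := by
    intro x hx
    simp only [Finset.mem_sdiff, Finset.mem_univ, true_and, Finset.mem_biUnion,
      Finset.mem_filter, not_exists, not_and]
    intro j hjlt hxj
    exact hmin j hjlt x hxj hx
  have hNcard : ⌈(n : ℝ) / k⌉₊ ≤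
      (Finset.univ \ (Finset.univ.filter (fun j' => j' < j0)).biUnion Cs).card :=
    le_trans hτS (Finset.card_le_card hSN)
  have hMCC := (hgreedy j0).1 hNcard
  obtain ⟨x, hxmem⟩ := hj0
  obtain ⟨hxC, hxS⟩ := Finset.mem_inter.mp hxmem
  have hgx : g x = j0 := by
    by_contra h
    exact Finset.disjoint_left.mp (hdisj (g x) j0 h) (hg x) hxC
  have h1 : ℓ x (Cs j0) ≤ maxOver (Cs j0) (fun i => ℓ i (Cs j0)) :=
    le_maxOver hxC (fun i => ℓ i (Cs j0))
  have h2 : maxOver (Cs j0) (fun i => ℓ i (Cs j0)) ≤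
      α * maxOver S (fun i => ℓ i S) := hMCC.2.2 S hSN hτS
  have h3 : minOver S (fun i => ℓ i (Cs (g i))) ≤ ℓ x (Cs (g x)) :=
    minOver_le hxS (fun i => ℓ i (Cs (g i)))
  rw [hgx] at h3
  linarith
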